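/- Let 𝓛 and 𝓐_un be linear endomorphisms of the space of d×d complex matrices such that: (a) 𝓐_un maps positive semidefinite matrices to positive semidefinite matrices; (b) for every s ≥ 0, exp(s·𝓛) maps density matrices to density matrices; (c) for every s ≥ 0 and every Hermitian d×d matrix F, ‖exp(s·𝓛)(F)‖₁ ≤ ‖F‖₁. Let T > 0, let N be a positive integer, let c > 0 and M ∈ ℕ, and set Δt := T/N. Assume ‖exp(Δt·𝓛)(ρ) − 𝓐_un(ρ)‖₁ ≤ c·Δt^{M+1} for every density matrix ρ, and N ≥ T·(2c)^{1/(M+1)}. Define the normalized (nonlinear) map 𝓐(ρ) := 𝓐_un(ρ)/Tr(𝓐_un(ρ)). Then for every density matrix ρ_0, ‖exp(T·𝓛)(ρ_0) − 𝓐^{∘N}(ρ_0)‖₁ ≤ 4c·T^{M+1}/N^M. -/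

import Mathlib

open MeasureTheory Filter
open scoped Matrix ComplexOrder

attribute [local instance] Matrix.normedAddCommGroup Matrix.normedSpace

/-- Trace norm (Schatten-1 norm) of a complex matrix: `‖A‖₁ = Tr √(Aᴴ A)`. -/
noncomputable def traceNorm {d : ℕ} (A : Matrix (Fin d) (Fin d) ℂ) : ℝ :=
  ((Matrix.posSemidef_conjTranspose_mul_self A).1.eigenvectorUnitary.1 *
      Matrix.diagonal (((↑) : ℝ → ℂ) ∘ (√·) ∘ (Matrix.posSemidef_conjTranspose_mul_self A).1.eigenvalues) *
      (star (Matrix.posSemidef_conjTranspose_mul_self A).1.eigenvectorUnitary :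
        Matrix (Fin d) (Fin d) ℂ)).trace.re

/-- The ring topology on operators on matrices (found automatically by the older library). -/
instance instIsTopologicalRingMatrixCLM {d : ℕ} :
    IsTopologicalRing (Matrix (Fin d) (Fin d) ℂ →L[ℂ] Matrix (Fin d) (Fin d) ℂ) :=
  @NonUnitalSeminormedRing.toIsTopologicalRing _
    (ContinuousLinearMap.toNormedRing (𝕜 := ℂ)
      (E := Matrix (Fin d) (Fin d) ℂ)).toNonUnitalNormedRing.toNonUnitalSeminormedRing

namespace TNAux

variable {d : ℕ}
open scoped MatrixOrder

noncomputable def conjD {A : Matrix (Fin d) (Fin d) ℂ} (hA : A.IsHermitian)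
    (f : Fin d → ℝ) : Matrix (Fin d) (Fin d) ℂ :=
  (hA.eigenvectorUnitary : Matrix (Fin d) (Fin d) ℂ) *
    Matrix.diagonal (Complex.ofReal ∘ f) *
    star (hA.eigenvectorUnitary : Matrix (Fin d) (Fin d) ℂ)

lemma star_mul_self_eigen {A : Matrix (Fin d) (Fin d) ℂ} (hA : A.IsHermitian) :
    star (hA.eigenvectorUnitary : Matrix (Fin d) (Fin d) ℂ) *
      (hA.eigenvectorUnitary : Matrix (Fin d) (Fin d) ℂ) = 1 :=
  Matrix.mem_unitaryGroup_iff'.mp hA.eigenvectorUnitary.2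

lemma mul_star_self_eigen {A : Matrix (Fin d) (Fin d) ℂ} (hA : A.IsHermitian) :
    (hA.eigenvectorUnitary : Matrix (Fin d) (Fin d) ℂ) *
      star (hA.eigenvectorUnitary : Matrix (Fin d) (Fin d) ℂ) = 1 :=
  Matrix.mem_unitaryGroup_iff.mp hA.eigenvectorUnitary.2

lemma diag_comp_mul (f g : Fin d → ℝ) :
    Matrix.diagonal (Complex.ofReal ∘ f) * Matrix.diagonal (Complex.ofReal ∘ g)
      = Matrix.diagonal (Complex.ofReal ∘ (f * g)) := by
  rw [Matrix.diagonal_mul_diagonal]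
  exact congrArg Matrix.diagonal (funext fun i => by simp)

lemma conjD_mul {A : Matrix (Fin d) (Fin d) ℂ} (hA : A.IsHermitian) (f g : Fin d → ℝ) :
    conjD hA f * conjD hA g = conjD hA (f * g) := by
  unfold conjD
  simp only [mul_assoc]
  rw [← mul_assoc (star _) (hA.eigenvectorUnitary : Matrix (Fin d) (Fin d) ℂ),
    star_mul_self_eigen hA, one_mul, ← mul_assoc (Matrix.diagonal _), diag_comp_mul]

lemma conjD_sub {A : Matrix (Fin d) (Fin d) ℂ} (hA : A.IsHermitian) (f g : Fin d → ℝ) :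
    conjD hA f - conjD hA g = conjD hA (f - g) := by
  unfold conjD
  have h1 : Matrix.diagonal (Complex.ofReal ∘ f) - Matrix.diagonal (Complex.ofReal ∘ g)
      = Matrix.diagonal (Complex.ofReal ∘ (f - g)) := by
    ext i j
    by_cases h : i = j <;> simp [Matrix.diagonal, h]
  rw [← sub_mul, ← Matrix.mul_sub, h1]

lemma conjD_add {A : Matrix (Fin d) (Fin d) ℂ} (hA : A.IsHermitian) (f g : Fin d → ℝ) :
    conjD hA f + conjD hA g = conjD hA (f + g) := by
  unfold conjD
  have h1 : Matrix.diagonal (Complex.ofReal ∘ f) + Matrix.diagonal (Complex.ofReal ∘ g)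
      = Matrix.diagonal (Complex.ofReal ∘ (f + g)) := by
    rw [Matrix.diagonal_add]
    exact congrArg Matrix.diagonal (funext fun i => by simp)
  rw [← add_mul, ← Matrix.mul_add, h1]

lemma conjD_one {A : Matrix (Fin d) (Fin d) ℂ} (hA : A.IsHermitian) :
    conjD hA (fun _ => 1) = 1 := by
  unfold conjD
  rw [show Complex.ofReal ∘ (fun _ : Fin d => (1:ℝ)) = (fun _ => (1:ℂ)) from
    funext fun _ => Complex.ofReal_one, Matrix.diagonal_one, mul_one, mul_star_self_eigen hA]

lemma conjD_trace {A : Matrix (Fin d) (Fin d) ℂ} (hA : A.IsHermitian) (f : Fin d → ℝ) :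
    (conjD hA f).trace = ((∑ i, f i : ℝ) : ℂ) := by
  unfold conjD
  rw [Matrix.trace_mul_cycle, star_mul_self_eigen hA, one_mul, Matrix.trace_diagonal]
  push_cast
  rfl

lemma conjD_posSemidef {A : Matrix (Fin d) (Fin d) ℂ} (hA : A.IsHermitian)
    {f : Fin d → ℝ} (hf : ∀ i, 0 ≤ f i) : (conjD hA f).PosSemidef := by
  unfold conjD
  rw [Matrix.star_eq_conjTranspose]
  refine (Matrix.PosSemidef.diagonal ?_).mul_mul_conjTranspose_same _
  intro i
  simpa using hf i

lemma spectral {A : Matrix (Fin d) (Fin d) ℂ} (hA : A.IsHermitian) :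
    A = conjD hA hA.eigenvalues := hA.spectral_theorem

lemma traceNorm_eq_cfc (A : Matrix (Fin d) (Fin d) ℂ) :
    traceNorm A = (CFC.sqrt (Aᴴ * A)).trace.re := by
  have h := Matrix.posSemidef_conjTranspose_mul_self A
  rw [CFC.sqrt_eq_cfc, cfc_nnreal_eq_real _ (Aᴴ*A), h.1.cfc_eq]
  unfold traceNorm Matrix.IsHermitian.cfc
  rw [Unitary.conjStarAlgAut_apply]
  congr 5
  ext i
  simp [max_eq_left (h.eigenvalues_nonneg i)]

lemma sqrt_eq {A : Matrix (Fin d) (Fin d) ℂ} (hA : A.IsHermitian) :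
    CFC.sqrt (Aᴴ * A)
      = conjD hA (fun i => |hA.eigenvalues i|) := by
  have hpsd : (conjD hA (fun i => |hA.eigenvalues i|)).PosSemidef :=
    conjD_posSemidef hA (fun i => abs_nonneg _)
  refine CFC.sqrt_unique ?_ hpsd.nonneg
  have hAA : Aᴴ * A = conjD hA (hA.eigenvalues * hA.eigenvalues) := by
    calc Aᴴ * A = conjD hA hA.eigenvalues * conjD hA hA.eigenvalues := by
          rw [← spectral hA, hA.eq]
      _ = conjD hA (hA.eigenvalues * hA.eigenvalues) := conjD_mul hA _ _
  rw [conjD_mul, hAA]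
  exact congrArg (conjD hA) (funext fun i => by
    simp only [Pi.mul_apply]; exact abs_mul_abs_self _)

lemma traceNorm_eq_sum_abs {A : Matrix (Fin d) (Fin d) ℂ} (hA : A.IsHermitian) :
    traceNorm A = ∑ i, |hA.eigenvalues i| := by
  rw [traceNorm_eq_cfc, sqrt_eq hA, conjD_trace]
  simp

lemma trace_eq_sum_eigen {A : Matrix (Fin d) (Fin d) ℂ} (hA : A.IsHermitian) :
    A.trace = ((∑ i, hA.eigenvalues i : ℝ) : ℂ) := by
  conv_lhs => rw [spectral hA]
  exact conjD_trace hA _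

lemma traceNorm_psd {A : Matrix (Fin d) (Fin d) ℂ} (hA : A.PosSemidef) :
    traceNorm A = A.trace.re := by
  rw [traceNorm_eq_sum_abs hA.1, trace_eq_sum_eigen hA.1]
  simp only [Complex.ofReal_re]
  exact (Finset.sum_congr rfl fun i _ => abs_of_nonneg (hA.eigenvalues_nonneg i))

lemma abs_trace_re_le {A : Matrix (Fin d) (Fin d) ℂ} (hA : A.IsHermitian) :
    |A.trace.re| ≤ traceNorm A := by
  rw [traceNorm_eq_sum_abs hA, trace_eq_sum_eigen hA]
  simpa using Finset.abs_sum_le_sum_abs hA.eigenvalues Finset.univ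

end TNAux

namespace TNAux2
open TNAux

variable {d : ℕ}
open scoped MatrixOrder

lemma psd_trace_re_nonneg {P : Matrix (Fin d) (Fin d) ℂ} (hP : P.PosSemidef) :
    0 ≤ P.trace.re := by
  rw [trace_eq_sum_eigen hP.1]
  simpa using Finset.sum_nonneg fun i _ => hP.eigenvalues_nonneg i

lemma trace_mul_re_nonneg {P R : Matrix (Fin d) (Fin d) ℂ}
    (hP : P.PosSemidef) (hR : R.PosSemidef) : 0 ≤ (P * R).trace.re := by
  obtain ⟨B, rfl⟩ := CStarAlgebra.nonneg_iff_eq_star_mul_self.mp hR.nonneg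
  rw [← mul_assoc, Matrix.trace_mul_cycle]
  exact psd_trace_re_nonneg (by simpa [Matrix.star_eq_conjTranspose] using hP.mul_mul_conjTranspose_same B)

lemma dual_le {X S : Matrix (Fin d) (Fin d) ℂ} (hX : X.IsHermitian)
    (h1 : (1 - S).PosSemidef) (h2 : (1 + S).PosSemidef) :
    (X * S).trace.re ≤ traceNorm X := by
  set lam := hX.eigenvalues with hlam
  set P := conjD hX (fun i => max (lam i) 0) with hPdef
  set Q := conjD hX (fun i => max (-lam i) 0) with hQdef
  have hP : P.PosSemidef := conjD_posSemidef hX fun i => le_max_right _ _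
  have hQ : Q.PosSemidef := conjD_posSemidef hX fun i => le_max_right _ _
  have hXPQ : X = P - Q := by
    rw [hPdef, hQdef, conjD_sub]
    conv_lhs => rw [spectral hX]
    exact congrArg (conjD hX) (funext fun i => by
      simp only [Pi.sub_apply]
      rcases le_total (lam i) 0 with h | h
      · rw [max_eq_right h, max_eq_left (by linarith)]; ring
      · rw [max_eq_left h, max_eq_right (by linarith)]; ring)
  have htn : traceNorm X = P.trace.re + Q.trace.re := by
    rw [traceNorm_eq_sum_abs hX, hPdef, hQdef, conjD_trace, conjD_trace]
    simp only [Complex.ofReal_re, ← Finset.sum_add_distrib]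
    exact Finset.sum_congr rfl fun i _ => by
      rcases le_total (lam i) 0 with h | h
      · rw [abs_of_nonpos h, max_eq_right h, max_eq_left (by linarith)]; ring
      · rw [abs_of_nonneg h, max_eq_left h, max_eq_right (by linarith)]; ring
  have hPS : (P * S).trace.re ≤ P.trace.re := by
    have := trace_mul_re_nonneg hP h1
    rw [Matrix.mul_sub, mul_one, Matrix.trace_sub, Complex.sub_re] at this
    linarith
  have hQS : -(Q * S).trace.re ≤ Q.trace.re := by
    have := trace_mul_re_nonneg hQ h2
    rw [Matrix.mul_add, mul_one, Matrix.trace_add, Complex.add_re] at this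
    linarith
  have : (X * S).trace.re = (P * S).trace.re - (Q * S).trace.re := by
    rw [hXPQ, Matrix.sub_mul, Matrix.trace_sub, Complex.sub_re]
  linarith

lemma traceNorm_add_le {A B : Matrix (Fin d) (Fin d) ℂ}
    (hA : A.IsHermitian) (hB : B.IsHermitian) :
    traceNorm (A + B) ≤ traceNorm A + traceNorm B := by
  have hC : (A + B).IsHermitian := hA.add hB
  set mu := hC.eigenvalues with hmu
  set s : Fin d → ℝ := fun i => if 0 ≤ mu i then 1 else -1 with hs
  set S := conjD hC s with hSdef
  have h1 : (1 - S).PosSemidef := by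
    rw [hSdef, ← conjD_one hC, conjD_sub]
    exact conjD_posSemidef hC fun i => by
      simp only [Pi.sub_apply, hs]; split <;> norm_num
  have h2 : (1 + S).PosSemidef := by
    rw [hSdef, ← conjD_one hC, conjD_add]
    exact conjD_posSemidef hC fun i => by
      simp only [Pi.add_apply, hs]; split <;> norm_num
  have hmul : ((A + B) * S).trace.re = traceNorm (A + B) := by
    have : (A + B) * S = conjD hC (mu * s) := by
      conv_lhs => rw [spectral hC]
      rw [hSdef, conjD_mul]
    rw [this, conjD_trace, traceNorm_eq_sum_abs hC]
    simp only [Complex.ofReal_re]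
    exact Finset.sum_congr rfl fun i _ => by
      simp only [Pi.mul_apply, hs]
      split <;> rename_i h
      · rw [abs_of_nonneg h]; ring
      · rw [abs_of_nonpos (le_of_not_ge h)]; ring
  have hsplit : ((A + B) * S).trace.re = (A * S).trace.re + (B * S).trace.re := by
    rw [Matrix.add_mul, Matrix.trace_add, Complex.add_re]
  have hA' := dual_le hA h1 h2
  have hB' := dual_le hB h1 h2
  linarith [hmul, hsplit]

lemma psd_smul {A : Matrix (Fin d) (Fin d) ℂ} (hA : A.PosSemidef)
    {r : ℝ} (hr : 0 ≤ r) : ((r : ℂ) • A).PosSemidef :=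
  hA.smul (by exact_mod_cast hr)

lemma traceNorm_real_smul (r : ℝ) (A : Matrix (Fin d) (Fin d) ℂ) :
    traceNorm ((r : ℂ) • A) = |r| * traceNorm A := by
  have hS : (CFC.sqrt (Aᴴ * A)).PosSemidef :=
    Matrix.nonneg_iff_posSemidef.mp (CFC.sqrt_nonneg _)
  have hB : (((|r| : ℝ) : ℂ) • CFC.sqrt (Aᴴ * A)).PosSemidef :=
    psd_smul hS (abs_nonneg r)
  have hsq : (((|r| : ℝ) : ℂ) • CFC.sqrt (Aᴴ * A)) ^ 2
      = ((r : ℂ) • A)ᴴ * ((r : ℂ) • A) := by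
    rw [smul_pow, sq (CFC.sqrt _),
      CFC.sqrt_mul_sqrt_self _ (Matrix.posSemidef_conjTranspose_mul_self A).nonneg,
      Matrix.conjTranspose_smul, Matrix.smul_mul, Matrix.mul_smul, smul_smul]
    congr 1
    rw [Complex.star_def, Complex.conj_ofReal]
    have : |r| * |r| = r * r := abs_mul_abs_self r
    rw [sq]
    exact_mod_cast congrArg (Complex.ofReal) this
  have heq : (((|r| : ℝ) : ℂ) • CFC.sqrt (Aᴴ * A))
      = CFC.sqrt (((r : ℂ) • A)ᴴ * ((r : ℂ) • A)) :=
    (CFC.sqrt_unique (by rw [← sq]; exact hsq) hB.nonneg).symm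
  rw [traceNorm_eq_cfc, traceNorm_eq_cfc, ← heq, Matrix.trace_smul]
  simp [smul_eq_mul, Complex.mul_re]

lemma traceNorm_zero : traceNorm (0 : Matrix (Fin d) (Fin d) ℂ) = 0 := by
  rw [traceNorm_psd Matrix.PosSemidef.zero, Matrix.trace_zero]
  simp

end TNAux2


set_option maxHeartbeats 1000000
set_option synthInstance.maxHeartbeats 400000
open TNAux TNAux2

/-- Finite-time normalization error (Lemma 6, second part, of the paper): iterating the
normalized scheme `𝓐(ρ) = 𝓐_un(ρ)/Tr(𝓐_un(ρ))` for `N` steps of size `Δt = T/N`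
accumulates trace-norm error at most `4 c T^{M+1} / N^M`, provided
`N ≥ T (2c)^{1/(M+1)}`. -/
theorem normalized_scheme_finite_time_error {d : ℕ} (hd : 1 ≤ d)
    (𝓛 : Matrix (Fin d) (Fin d) ℂ →L[ℂ] Matrix (Fin d) (Fin d) ℂ)
    (𝓐un : Matrix (Fin d) (Fin d) ℂ →ₗ[ℂ] Matrix (Fin d) (Fin d) ℂ)
    (ha : ∀ ρ : Matrix (Fin d) (Fin d) ℂ, ρ.PosSemidef → (𝓐un ρ).PosSemidef)
    (hb : ∀ s : ℝ, 0 ≤ s → ∀ ρ : Matrix (Fin d) (Fin d) ℂ, ρ.PosSemidef → ρ.trace = 1 →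
      ((NormedSpace.exp ((s : ℂ) • 𝓛)) ρ).PosSemidef
        ∧ ((NormedSpace.exp ((s : ℂ) • 𝓛)) ρ).trace = 1)
    (hc : ∀ s : ℝ, 0 ≤ s → ∀ F : Matrix (Fin d) (Fin d) ℂ, F.IsHermitian →
      traceNorm ((NormedSpace.exp ((s : ℂ) • 𝓛)) F) ≤ traceNorm F)
    (T : ℝ) (hT : 0 < T) (N : ℕ) (hN : 0 < N) (c : ℝ) (hcpos : 0 < c) (M : ℕ)
    (Δt : ℝ) (hΔt : Δt = T / N)
    (herr : ∀ ρ : Matrix (Fin d) (Fin d) ℂ, ρ.PosSemidef → ρ.trace = 1 →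
      traceNorm ((NormedSpace.exp ((Δt : ℂ) • 𝓛)) ρ - 𝓐un ρ) ≤ c * Δt ^ (M + 1))
    (hNbig : (N : ℝ) ≥ T * (2 * c) ^ ((1 : ℝ) / ((M : ℝ) + 1)))
    (𝓐 : Matrix (Fin d) (Fin d) ℂ → Matrix (Fin d) (Fin d) ℂ)
    (h𝓐 : 𝓐 = fun ρ => ((𝓐un ρ).trace)⁻¹ • 𝓐un ρ) :
    ∀ ρ0 : Matrix (Fin d) (Fin d) ℂ, ρ0.PosSemidef → ρ0.trace = 1 →
      traceNorm ((NormedSpace.exp ((T : ℂ) • 𝓛)) ρ0 - 𝓐^[N] ρ0)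
        ≤ 4 * c * T ^ (M + 1) / (N : ℝ) ^ M := by
  intro ρ0 hρ0 hρ0tr
  have hNpos : (0:ℝ) < N := by exact_mod_cast hN
  have hΔpos : 0 < Δt := by rw [hΔt]; positivity
  set ε := c * Δt ^ (M + 1) with hεdef
  have hεpos : 0 < ε := by positivity
  have h2c : (0:ℝ) < 2*c := by linarith
  have hεhalf : ε ≤ 1/2 := by
    have hΔle : Δt * (2*c) ^ ((1:ℝ)/((M:ℝ)+1)) ≤ 1 := by
      rw [hΔt, div_mul_eq_mul_div, div_le_one hNpos]
      exact hNbig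
    have h1 : (Δt * (2*c) ^ ((1:ℝ)/((M:ℝ)+1)))^(M+1) ≤ 1 := by
      apply pow_le_one₀ (by positivity) hΔle
    have hβpow : ((2*c) ^ ((1:ℝ)/((M:ℝ)+1))) ^ (M+1) = 2*c := by
      rw [← Real.rpow_natCast ((2*c) ^ ((1:ℝ)/((M:ℝ)+1))) (M+1), ← Real.rpow_mul h2c.le]
      have : (1:ℝ)/((M:ℝ)+1) * ((M+1 : ℕ):ℝ) = 1 := by
        push_cast
        field_simp
      rw [this, Real.rpow_one]
    rw [mul_pow, hβpow] at h1
    nlinarith [h1]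
  -- single step
  have step : ∀ ρ : Matrix (Fin d) (Fin d) ℂ, ρ.PosSemidef → ρ.trace = 1 →
      (𝓐 ρ).PosSemidef ∧ (𝓐 ρ).trace = 1 ∧
      traceNorm ((NormedSpace.exp ((Δt:ℂ) • 𝓛)) ρ - 𝓐 ρ) ≤ 2 * ε := by
    intro ρ hρ hρtr
    have hσ := ha ρ hρ
    obtain ⟨hE, hEtr⟩ := hb Δt hΔpos.le ρ hρ hρtr
    have htr : (𝓐un ρ).trace = ((∑ i, hσ.1.eigenvalues i : ℝ) : ℂ) := trace_eq_sum_eigen hσ.1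
    set τ : ℝ := ∑ i, hσ.1.eigenvalues i with hτdef
    have hτ0 : 0 ≤ τ := Finset.sum_nonneg fun i _ => hσ.eigenvalues_nonneg i
    have hdiffH : ((NormedSpace.exp ((Δt:ℂ) • 𝓛)) ρ - 𝓐un ρ).IsHermitian := hE.1.sub hσ.1
    have h1 : |(1:ℝ) - τ| ≤ ε := by
      have habs := abs_trace_re_le hdiffH
      have h2 := herr ρ hρ hρtr
      rw [Matrix.trace_sub, hEtr, htr] at habs
      simp only [Complex.sub_re, Complex.one_re, Complex.ofReal_re] at habs
      exact habs.trans h2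
    have hτhalf : 1/2 ≤ τ := by
      have := abs_le.mp h1
      linarith [this.2]
    have hτpos : 0 < τ := by linarith
    have hτne : (τ : ℂ) ≠ 0 := by exact_mod_cast hτpos.ne'
    have hAρ : 𝓐 ρ = ((τ⁻¹ : ℝ) : ℂ) • 𝓐un ρ := by
      rw [h𝓐]
      simp only
      rw [htr, Complex.ofReal_inv]
    have hAρpsd : (𝓐 ρ).PosSemidef := by
      rw [hAρ]; exact psd_smul hσ (inv_nonneg.mpr hτ0)
    have hAρtr : (𝓐 ρ).trace = 1 := by
      rw [hAρ, Matrix.trace_smul, htr, smul_eq_mul, Complex.ofReal_inv,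
        inv_mul_cancel₀ hτne]
    refine ⟨hAρpsd, hAρtr, ?_⟩
    have hsub : 𝓐un ρ - 𝓐 ρ = (((1 - τ⁻¹ : ℝ)):ℂ) • 𝓐un ρ := by
      rw [hAρ]
      nth_rewrite 1 [← one_smul ℂ (𝓐un ρ)]
      rw [← sub_smul]
      congr 1
      push_cast
      ring
    have htn2 : traceNorm (𝓐un ρ - 𝓐 ρ) ≤ ε := by
      rw [hsub, traceNorm_real_smul, traceNorm_psd hσ, htr, Complex.ofReal_re]
      have : |1 - τ⁻¹| * τ = |1 - τ| := by
        calc |1 - τ⁻¹| * τ = |(1 - τ⁻¹) * τ| := by rw [abs_mul, abs_of_pos hτpos]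
          _ = |τ - 1| := by rw [sub_mul, one_mul, inv_mul_cancel₀ hτpos.ne']
          _ = |1 - τ| := abs_sub_comm _ _
      rw [this]
      exact h1
    have hdecomp : (NormedSpace.exp ((Δt:ℂ) • 𝓛)) ρ - 𝓐 ρ
        = ((NormedSpace.exp ((Δt:ℂ) • 𝓛)) ρ - 𝓐un ρ) + (𝓐un ρ - 𝓐 ρ) := by
      abel
    rw [hdecomp]
    have h2H : (𝓐un ρ - 𝓐 ρ).IsHermitian := hσ.1.sub hAρpsd.1
    calc traceNorm _ ≤ traceNorm ((NormedSpace.exp ((Δt:ℂ) • 𝓛)) ρ - 𝓐un ρ)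
          + traceNorm (𝓐un ρ - 𝓐 ρ) := traceNorm_add_le hdiffH h2H
      _ ≤ ε + ε := add_le_add (herr ρ hρ hρtr) htn2
      _ = 2 * ε := by ring
  -- induction
  have main : ∀ k : ℕ, (𝓐^[k] ρ0).PosSemidef ∧ (𝓐^[k] ρ0).trace = 1 ∧
      traceNorm ((NormedSpace.exp ((((k:ℝ) * Δt : ℝ) : ℂ) • 𝓛)) ρ0 - 𝓐^[k] ρ0)
        ≤ k * (2 * ε) := by
    intro k
    induction k with
    | zero =>
      refine ⟨by simpa using hρ0, by simpa using hρ0tr, ?_⟩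
      have hz : (((((0:ℕ):ℝ)) * Δt : ℝ) : ℂ) • 𝓛 = 0 := by
        ext x
        simp
      rw [Function.iterate_zero, id_eq, hz, NormedSpace.exp_zero,
        ContinuousLinearMap.one_apply, sub_self, traceNorm_zero]
      simp
    | succ k ih =>
      obtain ⟨hY, hYtr, hInd⟩ := ih
      have hkΔ : (0:ℝ) ≤ (k:ℝ) * Δt := by positivity
      obtain ⟨hX, hXtr⟩ := hb ((k:ℝ) * Δt) hkΔ ρ0 hρ0 hρ0tr
      obtain ⟨hAY, hAYtr, hstep⟩ := step (𝓐^[k] ρ0) hY hYtr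
      have hcomm : Commute ((Δt:ℂ) • 𝓛) ((((k:ℝ) * Δt : ℝ):ℂ) • 𝓛) := by
        unfold Commute SemiconjBy
        ext x
        simp [ContinuousLinearMap.mul_apply, _root_.map_smul, smul_smul, mul_comm, mul_left_comm]
      have hsc : (((((k+1:ℕ)):ℝ) * Δt : ℝ) : ℂ) • 𝓛
          = (Δt:ℂ) • 𝓛 + ((((k:ℕ):ℝ) * Δt : ℝ):ℂ) • 𝓛 := by
        ext x
        simp only [ContinuousLinearMap.smul_apply, ContinuousLinearMap.add_apply]
        rw [← add_smul]
        congr 1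
        push_cast
        ring
      have hexp : NormedSpace.exp ((((((k+1:ℕ)):ℝ) * Δt : ℝ):ℂ) • 𝓛)
          = NormedSpace.exp ((Δt:ℂ) • 𝓛)
            * NormedSpace.exp ((((k:ℝ) * Δt : ℝ):ℂ) • 𝓛) := by
        rw [hsc]
        letI i1 : NormedRing (Matrix (Fin d) (Fin d) ℂ →L[ℂ] Matrix (Fin d) (Fin d) ℂ) :=
          ContinuousLinearMap.toNormedRing (𝕜 := ℂ) (E := Matrix (Fin d) (Fin d) ℂ)
        letI i2 : NormedAlgebra ℂ (Matrix (Fin d) (Fin d) ℂ →L[ℂ] Matrix (Fin d) (Fin d) ℂ) :=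
          ContinuousLinearMap.toNormedAlgebra (𝕜 := ℂ) (E := Matrix (Fin d) (Fin d) ℂ)
        letI i3 : NormedAlgebra ℚ (Matrix (Fin d) (Fin d) ℂ →L[ℂ] Matrix (Fin d) (Fin d) ℂ) :=
          NormedAlgebra.restrictScalars ℚ ℂ _
        haveI i5 : SequentialSpace (Matrix (Fin d) (Fin d) ℂ) :=
          (inferInstance : SequentialSpace (Fin d → Fin d → ℂ))
        haveI i4 : CompleteSpace (Matrix (Fin d) (Fin d) ℂ →L[ℂ] Matrix (Fin d) (Fin d) ℂ) :=
          ContinuousLinearMap.instCompleteSpace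
        exact @NormedSpace.exp_add_of_commute _ i1 i3 i4 _ _ hcomm
      have hdec : (NormedSpace.exp ((((((k+1:ℕ)):ℝ) * Δt : ℝ):ℂ) • 𝓛)) ρ0 - 𝓐^[k+1] ρ0
          = (NormedSpace.exp ((Δt:ℂ) • 𝓛))
              ((NormedSpace.exp ((((k:ℝ) * Δt : ℝ):ℂ) • 𝓛)) ρ0 - 𝓐^[k] ρ0)
            + ((NormedSpace.exp ((Δt:ℂ) • 𝓛)) (𝓐^[k] ρ0) - 𝓐 (𝓐^[k] ρ0)) := by
        rw [hexp, ContinuousLinearMap.mul_apply, Function.iterate_succ_apply', map_sub]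
        abel
      refine ⟨by rw [Function.iterate_succ_apply']; exact hAY,
        by rw [Function.iterate_succ_apply']; exact hAYtr, ?_⟩
      rw [hdec]
      have hterm1H : ((NormedSpace.exp ((Δt:ℂ) • 𝓛))
          ((NormedSpace.exp ((((k:ℝ) * Δt : ℝ):ℂ) • 𝓛)) ρ0 - 𝓐^[k] ρ0)).IsHermitian := by
        rw [map_sub]
        exact ((hb Δt hΔpos.le _ hX hXtr).1.1).sub ((hb Δt hΔpos.le _ hY hYtr).1.1)
      have hterm2H : ((NormedSpace.exp ((Δt:ℂ) • 𝓛)) (𝓐^[k] ρ0) - 𝓐 (𝓐^[k] ρ0)).IsHermitian :=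
        ((hb Δt hΔpos.le _ hY hYtr).1.1).sub hAY.1
      have h1' : traceNorm ((NormedSpace.exp ((Δt:ℂ) • 𝓛))
            ((NormedSpace.exp ((((k:ℝ) * Δt : ℝ):ℂ) • 𝓛)) ρ0 - 𝓐^[k] ρ0))
          ≤ traceNorm ((NormedSpace.exp ((((k:ℝ) * Δt : ℝ):ℂ) • 𝓛)) ρ0 - 𝓐^[k] ρ0) :=
        hc Δt hΔpos.le _ (hX.1.sub hY.1)
      calc traceNorm _
          ≤ traceNorm _ + traceNorm _ := traceNorm_add_le hterm1H hterm2H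
        _ ≤ (k:ℝ) * (2*ε) + 2*ε := add_le_add (h1'.trans hInd) hstep
        _ = ((k+1:ℕ):ℝ) * (2*ε) := by push_cast; ring
  obtain ⟨-, -, hfin⟩ := main N
  have hNT : (((N:ℝ) * Δt : ℝ) : ℂ) • 𝓛 = ((T:ℝ):ℂ) • 𝓛 := by
    rw [hΔt]
    congr 2
    field_simp
  rw [hNT] at hfin
  refine hfin.trans ?_
  have heq : (N:ℝ) * (2 * ε) = 2*c*T^(M+1)/(N:ℝ)^M := by
    rw [hεdef, hΔt, div_pow]
    field_simp [pow_succ]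
    ring
  rw [heq]
  have hden : (0:ℝ) < (N:ℝ)^M := by positivity
  rw [div_le_div_iff₀ hden hden]
  nlinarith [mul_pos (mul_pos h2c (pow_pos hT (M+1))) (pow_pos hNpos M)]
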